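/- Let r > 1 be real and let i ≥ 1 be an integer. Writing p_k for the k-th prime and ζ_i(r) = ∏_{k>i} (1 − p_k^{-r})^{-1}, one has ζ_{i+1}(r) − 1 > 3^{-r} · (ζ_i(r) − 1). -/

import Mathlib

set_option linter.unusedSectionVars false
set_option maxHeartbeats 2000000

/-- `p_j`, the `j`-th rational prime (`1`-indexed: `pr 1 = 2`, `pr 2 = 3`, …). -/
noncomputable def pr (j : ℕ) : ℕ := Nat.nth Nat.Prime (j - 1)

/-- `ζ_i(r) = ∏_{k > i} (1 − p_k^{-r})⁻¹`. -/
noncomputable def zetaTail (r : ℝ) (i : ℕ) : ℝ :=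
  ∏' k : {k : ℕ // i < k}, (1 - (pr (k : ℕ) : ℝ) ^ (-r))⁻¹

lemma pr_prime (j : ℕ) : (pr j).Prime := Nat.prime_nth_prime _

lemma pr_two_le (j : ℕ) : 2 ≤ pr j := (pr_prime j).two_le

lemma pr_ge (j : ℕ) : j + 1 ≤ pr j := by
  have h := Nat.add_two_le_nth_prime (j - 1)
  show j + 1 ≤ Nat.nth Nat.Prime (j - 1)
  omega

lemma pr_bertrand (j : ℕ) (hj : 1 ≤ j) : pr (j + 1) < 2 * pr j := by
  obtain ⟨q, hq, hlt, hle⟩ :=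
    Nat.exists_prime_lt_and_le_two_mul (pr j) (by have := pr_two_le j; omega)
  have hne : q ≠ 2 * pr j := by
    intro h
    have h2 : ¬ Nat.Prime (2 * pr j) :=
      Nat.not_prime_mul (by norm_num) (by have := pr_two_le j; omega)
    exact h2 (h ▸ hq)
  have hq2 : q < 2 * pr j := lt_of_le_of_ne hle hne
  have hmin : pr (j + 1) ≤ q := by
    by_contra h
    push_neg at h
    have hj' : j + 1 - 1 = (j - 1) + 1 := by omega
    rw [pr, hj'] at h
    have := Nat.le_nth_of_lt_nth_succ h hq
    rw [← pr] at this
    omega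
  omega

lemma pr_mono {a b : ℕ} (ha : 1 ≤ a) (hab : a ≤ b) : pr a ≤ pr b := by
  unfold pr
  exact (Nat.nth_le_nth Nat.infinite_setOf_prime).mpr (by omega)

lemma pr_three : pr 3 = 5 := by
  show Nat.nth Nat.Prime 2 = 5
  have h5 : Nat.Prime 5 := by norm_num
  have h := Nat.nth_count (p := Nat.Prime) h5
  have hc : Nat.count Nat.Prime 5 = 2 := by
    rw [Nat.count_succ, Nat.count_succ, Nat.count_succ, Nat.count_succ, Nat.count_succ,
      Nat.count_zero]
    norm_num
  rwa [hc] at h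

lemma pr_four : pr 4 = 7 := by
  show Nat.nth Nat.Prime 3 = 7
  have h7 : Nat.Prime 7 := by norm_num
  have h := Nat.nth_count (p := Nat.Prime) h7
  have hc : Nat.count Nat.Prime 7 = 3 := by
    rw [Nat.count_succ, Nat.count_succ, Nat.count_succ, Nat.count_succ, Nat.count_succ,
      Nat.count_succ, Nat.count_succ, Nat.count_zero]
    norm_num
  rwa [hc] at h

lemma pr_two : pr 2 = 3 := by
  show Nat.nth Nat.Prime 1 = 3
  exact Nat.nth_prime_one_eq_three

section main

variable {r : ℝ} (hr : 1 < r)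

include hr

lemma u_pos (j : ℕ) : 0 < (pr j : ℝ) ^ (-r) := by
  apply Real.rpow_pos_of_pos
  have := pr_two_le j
  positivity

lemma u_le (j : ℕ) {c : ℝ} (hc : 0 < c) (h : c ≤ (pr j : ℝ)) :
    (pr j : ℝ) ^ (-r) ≤ c ^ (-r) :=
  Real.rpow_le_rpow_of_nonpos hc h (by linarith)

lemma u_half (j : ℕ) : (pr j : ℝ) ^ (-r) ≤ 1 / 2 := by
  have h1 : (pr j : ℝ) ^ (-r) ≤ (2 : ℝ) ^ (-r) :=
    u_le hr j (by norm_num) (by exact_mod_cast pr_two_le j)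
  have h2 : (2 : ℝ) ^ (-r) ≤ (2 : ℝ) ^ (-1 : ℝ) :=
    Real.rpow_le_rpow_of_exponent_le (by norm_num) (by linarith)
  rw [Real.rpow_neg_one] at h2
  norm_num at h2
  linarith

lemma u_lt_one (j : ℕ) : (pr j : ℝ) ^ (-r) < 1 := by
  have := u_half hr j; linarith

lemma log_summable (i : ℕ) :
    Summable (fun n : ℕ => Real.log (1 - (pr (i + 1 + n) : ℝ) ^ (-r))⁻¹) := by
  have hs0 : Summable (fun n : ℕ => (((n : ℝ)) ^ r)⁻¹) :=
    Real.summable_nat_rpow_inv.mpr hr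
  have hs1 : Summable (fun n : ℕ => ((((n + 1 : ℕ) : ℝ)) ^ r)⁻¹) :=
    (summable_nat_add_iff 1).mpr hs0
  have hs2 : Summable (fun n : ℕ => 2 * (((n : ℝ) + 1) ^ (-r))) := by
    apply Summable.mul_left
    convert hs1 using 2 with n
    case e'_3 => rfl
    rw [Real.rpow_neg (by positivity)]
    push_cast
    ring_nf
  apply Summable.of_nonneg_of_le _ _ hs2
  · intro n
    set u := (pr (i + 1 + n) : ℝ) ^ (-r) with hu
    have hu0 : 0 < u := u_pos hr _
    have hu2 : u ≤ 1 / 2 := u_half hr _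
    rw [Real.log_inv]
    have := Real.log_nonpos (by linarith) (by linarith : 1 - u ≤ 1)
    linarith
  · intro n
    set u := (pr (i + 1 + n) : ℝ) ^ (-r) with hu
    have hu0 : 0 < u := u_pos hr _
    have hu2 : u ≤ 1 / 2 := u_half hr _
    have h1u : (0 : ℝ) < 1 - u := by linarith
    have hlog : Real.log (1 - u)⁻¹ ≤ (1 - u)⁻¹ - 1 := by
      have := Real.log_le_sub_one_of_pos (x := (1 - u)⁻¹) (by positivity)
      linarith
    have hinv : (1 - u)⁻¹ ≤ 1 + 2 * u := by
      rw [← one_div, div_le_iff₀ h1u]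
      nlinarith
    have hub : u ≤ ((n : ℝ) + 1) ^ (-r) := by
      have hge : (n + 1 : ℕ) ≤ pr (i + 1 + n) := by
        have := pr_ge (i + 1 + n); omega
      have h2 := u_le hr (i + 1 + n) (c := (n : ℝ) + 1) (by positivity)
        (by exact_mod_cast hge)
      exact h2
    linarith

lemma multipliable_tail (i : ℕ) :
    Multipliable (fun n : ℕ => (1 - (pr (i + 1 + n) : ℝ) ^ (-r))⁻¹) := by
  obtain ⟨a, ha⟩ := log_summable hr i
  have hp := ha.rexp
  have heq : (Real.exp ∘ fun n : ℕ => Real.log (1 - (pr (i + 1 + n) : ℝ) ^ (-r))⁻¹)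
      = fun n : ℕ => (1 - (pr (i + 1 + n) : ℝ) ^ (-r))⁻¹ := by
    funext n
    have h1 : (pr (i + 1 + n) : ℝ) ^ (-r) < 1 := u_lt_one hr _
    have h2 : (0 : ℝ) < 1 - (pr (i + 1 + n) : ℝ) ^ (-r) := by linarith
    simp only [Function.comp_apply]
    rw [Real.exp_log (by positivity)]
  rw [heq] at hp
  exact ⟨_, hp⟩

lemma zeta_eq (i : ℕ) :
    zetaTail r i = ∏' n : ℕ, (1 - (pr (i + 1 + n) : ℝ) ^ (-r))⁻¹ := by
  unfold zetaTail
  let e : ℕ ≃ {k : ℕ // i < k} :=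
    { toFun := fun n => ⟨i + 1 + n, by omega⟩
      invFun := fun k => k.1 - (i + 1)
      left_inv := fun n => by show i + 1 + n - (i + 1) = n; omega
      right_inv := fun k => Subtype.ext (by
        have := k.2
        show i + 1 + (k.1 - (i + 1)) = k.1
        omega) }
  rw [← Equiv.tprod_eq e (fun k : {k : ℕ // i < k} => (1 - (pr (k : ℕ) : ℝ) ^ (-r))⁻¹)]
  exact tprod_congr fun n => rfl

lemma zeta_succ (i : ℕ) :
    zetaTail r i = (1 - (pr (i + 1) : ℝ) ^ (-r))⁻¹ * zetaTail r (i + 1) := by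
  rw [zeta_eq hr i, zeta_eq hr (i + 1)]
  have hm' : Multipliable (fun n : ℕ => (1 - (pr (i + 1 + (n + 1)) : ℝ) ^ (-r))⁻¹) :=
    (multipliable_tail hr (i + 1)).congr fun n => by
      rw [show i + 1 + 1 + n = i + 1 + (n + 1) by omega]
  rw [tprod_eq_zero_mul' hm']
  exact congrArg (fun q => (1 - (pr (i + 1) : ℝ) ^ (-r))⁻¹ * q)
    (tprod_congr fun n => by rw [show i + 1 + (n + 1) = i + 1 + 1 + n by omega])

lemma zeta_ge_one (i : ℕ) : 1 ≤ zetaTail r i := by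
  rw [zeta_eq hr i]
  have hp := (multipliable_tail hr i).hasProd
  refine ge_of_tendsto' hp fun s => ?_
  calc (1:ℝ) = ∏ _b ∈ s, 1 := Finset.prod_const_one.symm
    _ ≤ ∏ b ∈ s, (1 - (pr (i + 1 + b) : ℝ) ^ (-r))⁻¹ := by
        refine Finset.prod_le_prod (fun j _ => zero_le_one) fun j _ => ?_
        have h1 : (pr (i + 1 + j) : ℝ) ^ (-r) < 1 := u_lt_one hr _
        have h0 : 0 < (pr (i + 1 + j) : ℝ) ^ (-r) := u_pos hr _
        rw [← one_div, le_div_iff₀ (by linarith)]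
        linarith

end main

lemma one_add_le_inv {w : ℝ} (h0 : 0 ≤ w) (h1 : w < 1) : 1 + w ≤ (1 - w)⁻¹ := by
  rw [← one_div, le_div_iff₀ (by linarith)]
  nlinarith

/-- For real `r > 1` and every integer `i ≥ 1`, `ζ_{i+1}(r) − 1 > 3^{-r}(ζ_i(r) − 1)`. -/
theorem stmt11 (r : ℝ) (hr : 1 < r) (i : ℕ) (hi : 1 ≤ i) :
    (3 : ℝ) ^ (-r) * (zetaTail r i - 1) < zetaTail r (i + 1) - 1 := by
  set x := (pr (i + 1) : ℝ) ^ (-r) with hxdef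
  set y := (pr (i + 2) : ℝ) ^ (-r) with hydef
  set z := (pr (i + 3) : ℝ) ^ (-r) with hzdef
  set t := (3 : ℝ) ^ (-r) with htdef
  set A := zetaTail r i with hAdef
  set B := zetaTail r (i + 1) with hBdef
  set C := zetaTail r (i + 3) with hCdef
  have hx0 : 0 < x := u_pos hr _
  have hy0 : 0 < y := u_pos hr _
  have hz0 : 0 < z := u_pos hr _
  have hx1 : x < 1 := u_lt_one hr _
  have hy1 : y < 1 := u_lt_one hr _
  have hz1 : z < 1 := u_lt_one hr _
  have ht0 : 0 < t := Real.rpow_pos_of_pos (by norm_num) _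
  have ht3 : t < 1 / 3 := by
    have h2 : (3 : ℝ) ^ (-r) < (3 : ℝ) ^ (-1 : ℝ) :=
      Real.rpow_lt_rpow_of_exponent_lt (by norm_num) (by linarith)
    rw [Real.rpow_neg_one] at h2
    rw [htdef]
    norm_num at h2 ⊢
    linarith
  have hA : A = (1 - x)⁻¹ * B := zeta_succ hr i
  have hB : B = (1 - y)⁻¹ * ((1 - z)⁻¹ * C) := by
    have h1 := zeta_succ hr (i + 1)
    have h2 := zeta_succ hr (i + 2)
    rw [show i + 1 + 1 = i + 2 by omega] at h1
    rw [show i + 2 + 1 = i + 3 by omega] at h2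
    rw [hBdef, h1, h2]
  have hC1 : 1 ≤ C := zeta_ge_one hr _
  have hB1 : y + z ≤ B - 1 := by
    have hiy := one_add_le_inv hy0.le hy1
    have hiz := one_add_le_inv hz0.le hz1
    have hzinv : (0 : ℝ) ≤ (1 - z)⁻¹ := inv_nonneg.mpr (by linarith)
    have hyinv : (0 : ℝ) ≤ (1 - y)⁻¹ := inv_nonneg.mpr (by linarith)
    have h1 : (1 + z) * 1 ≤ (1 - z)⁻¹ * C :=
      mul_le_mul hiz hC1 (by norm_num) hzinv
    have h2 : (1 + y) * ((1 + z) * 1) ≤ (1 - y)⁻¹ * ((1 - z)⁻¹ * C) :=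
      mul_le_mul hiy h1 (by nlinarith) hyinv
    rw [← hB] at h2
    nlinarith
  have hx_t : x ≤ t := by
    have h3 : 3 ≤ pr (i + 1) := by
      have := pr_mono (a := 2) (b := i + 1) (by norm_num) (by omega)
      have h2 := pr_two
      omega
    exact u_le hr (i + 1) (by norm_num) (by exact_mod_cast h3)
  have key : t * x < (B - 1) * (1 - x - t) := by
    rcases eq_or_lt_of_le hi with hi1 | hi2
    · -- i = 1 : primes 3, 5, 7
      have hi1' : i = 1 := hi1.symm
      subst hi1'
      have hxe : x = t := by
        rw [hxdef, htdef, show (1:ℕ) + 1 = 2 from rfl, pr_two]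
        norm_num
      have hye : y = (5 : ℝ) ^ (-r) := by
        rw [hydef, show (1:ℕ) + 2 = 3 from rfl, pr_three]; norm_num
      have hze : z = (7 : ℝ) ^ (-r) := by
        rw [hzdef, show (1:ℕ) + 3 = 4 from rfl, pr_four]; norm_num
      have htx : t * x = (9 : ℝ) ^ (-r) := by
        rw [hxe, htdef, ← Real.mul_rpow (by norm_num) (by norm_num)]
        norm_num
      have h95 : (9 : ℝ) ^ (-r) ≤ (5 / 9) * y := by
        have he : (9 : ℝ) ^ (-r) = (9 / 5 : ℝ) ^ (-r) * (5 : ℝ) ^ (-r) := by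
          rw [← Real.mul_rpow (by norm_num) (by norm_num)]; norm_num
        have h1 : (9 / 5 : ℝ) ^ (-r) ≤ (9 / 5 : ℝ) ^ (-1 : ℝ) :=
          Real.rpow_le_rpow_of_exponent_le (by norm_num) (by linarith)
        rw [Real.rpow_neg_one] at h1
        have h50 : (0:ℝ) < (5 : ℝ) ^ (-r) := Real.rpow_pos_of_pos (by norm_num) _
        rw [he, hye]
        nlinarith
      have h97 : (9 : ℝ) ^ (-r) ≤ (7 / 9) * z := by
        have he : (9 : ℝ) ^ (-r) = (9 / 7 : ℝ) ^ (-r) * (7 : ℝ) ^ (-r) := by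
          rw [← Real.mul_rpow (by norm_num) (by norm_num)]; norm_num
        have h1 : (9 / 7 : ℝ) ^ (-r) ≤ (9 / 7 : ℝ) ^ (-1 : ℝ) :=
          Real.rpow_le_rpow_of_exponent_le (by norm_num) (by linarith)
        rw [Real.rpow_neg_one] at h1
        have h70 : (0:ℝ) < (7 : ℝ) ^ (-r) := Real.rpow_pos_of_pos (by norm_num) _
        rw [he, hze]
        nlinarith
      have hD : (35 / 108 : ℝ) < 1 - x - t := by
        rw [hxe]; linarith
      have hyz0 : 0 < y + z := by linarith
      calc t * x = (9 : ℝ) ^ (-r) := htx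
        _ ≤ (35 / 108) * (y + z) := by linarith
        _ < (1 - x - t) * (y + z) := mul_lt_mul_of_pos_right hD hyz0
        _ ≤ (B - 1) * (1 - x - t) := by nlinarith
    · -- i ≥ 2 : pr (i+1) ≥ 5
      have hP5 : 5 ≤ pr (i + 1) := by
        have hm := pr_mono (a := 3) (b := i + 1) (by norm_num) (by omega)
        have h3 := pr_three
        omega
      have hx5 : x ≤ (5 : ℝ) ^ (-r) :=
        u_le hr (i + 1) (by norm_num) (by exact_mod_cast hP5)
      have h5b : (5 : ℝ) ^ (-r) ≤ 1 / 5 := by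
        have h2 : (5 : ℝ) ^ (-r) ≤ (5 : ℝ) ^ (-1 : ℝ) :=
          Real.rpow_le_rpow_of_exponent_le (by norm_num) (by linarith)
        rw [Real.rpow_neg_one] at h2
        norm_num at h2 ⊢
        linarith
      have hD : (7 / 15 : ℝ) ≤ 1 - x - t := by linarith
      have hQ : pr (i + 2) < 2 * pr (i + 1) := by
        have := pr_bertrand (i + 1) (by omega)
        rwa [show i + 1 + 1 = i + 2 by omega] at this
      have hR : pr (i + 3) < 4 * pr (i + 1) := by
        have h1 := pr_bertrand (i + 2) (by omega)
        rw [show i + 2 + 1 = i + 3 by omega] at h1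
        omega
      have hPpos : (0:ℝ) < (pr (i + 1) : ℝ) := by
        have := pr_two_le (i + 1); positivity
      have hyx : (2 : ℝ) ^ (-r) * x < y := by
        have h1 : (2 * (pr (i + 1) : ℝ)) ^ (-r) < (pr (i + 2) : ℝ) ^ (-r) := by
          apply Real.rpow_lt_rpow_of_neg (by have := pr_two_le (i + 2); positivity)
          · exact_mod_cast hQ
          · linarith
        rwa [Real.mul_rpow (by norm_num) hPpos.le] at h1
      have hzx : (4 : ℝ) ^ (-r) * x < z := by
        have h1 : (4 * (pr (i + 1) : ℝ)) ^ (-r) < (pr (i + 3) : ℝ) ^ (-r) := by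
          apply Real.rpow_lt_rpow_of_neg (by have := pr_two_le (i + 3); positivity)
          · exact_mod_cast hR
          · linarith
        rwa [Real.mul_rpow (by norm_num) hPpos.le] at h1
      have hsum : (9 / 4) * t ≤ (2 : ℝ) ^ (-r) + (4 : ℝ) ^ (-r) := by
        set a := (3 / 2 : ℝ) ^ r with hadef
        set u := (3 / 4 : ℝ) ^ r with hudef
        have h3 : (0:ℝ) < (3:ℝ) ^ r := Real.rpow_pos_of_pos (by norm_num) _
        have h2' : (0:ℝ) < (2:ℝ) ^ r := Real.rpow_pos_of_pos (by norm_num) _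
        have h4' : (0:ℝ) < (4:ℝ) ^ r := Real.rpow_pos_of_pos (by norm_num) _
        have e1 : (2 : ℝ) ^ (-r) = a * t := by
          rw [hadef, htdef, Real.rpow_neg (by norm_num), Real.rpow_neg (by norm_num),
            Real.div_rpow (by norm_num) (by norm_num)]
          field_simp
        have e2 : (4 : ℝ) ^ (-r) = u * t := by
          rw [hudef, htdef, Real.rpow_neg (by norm_num), Real.rpow_neg (by norm_num),
            Real.div_rpow (by norm_num) (by norm_num)]
          field_simp
        have ha : (3 / 2 : ℝ) ≤ a := by
          have := Real.rpow_le_rpow_of_exponent_le (x := (3/2:ℝ)) (by norm_num) hr.le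
          rwa [Real.rpow_one] at this
        have hau : (9 / 8 : ℝ) ≤ a * u := by
          rw [hadef, hudef, ← Real.mul_rpow (by norm_num) (by norm_num)]
          have h98 := Real.rpow_le_rpow_of_exponent_le (x := (9/8:ℝ)) (by norm_num) hr.le
          rw [Real.rpow_one] at h98
          calc (9/8 : ℝ) ≤ (9/8 : ℝ) ^ r := h98
            _ = (3/2 * (3/4) : ℝ) ^ r := by norm_num
        have hu0 : 0 < u := Real.rpow_pos_of_pos (by norm_num) _
        have ha0 : 0 < a := by linarith
        have hkey : (9 / 4 : ℝ) ≤ a + u := by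
          nlinarith [mul_nonneg (by linarith : (0:ℝ) ≤ a - 3/2)
            (by linarith : (0:ℝ) ≤ a - 3/4)]
        rw [e1, e2]
        nlinarith
      have hmul : (9 / 4) * t * x ≤ ((2 : ℝ) ^ (-r) + (4 : ℝ) ^ (-r)) * x :=
        mul_le_mul_of_nonneg_right hsum hx0.le
      have hA1 : (9 / 4) * t * x < B - 1 := by nlinarith
      have htx0 : 0 < t * x := mul_pos ht0 hx0
      nlinarith [mul_nonneg (by nlinarith : (0:ℝ) ≤ B - 1)
        (by linarith : (0:ℝ) ≤ 1 - x - t - 7/15)]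
  have h1x : 0 < 1 - x := by linarith
  have hA1 : A - 1 = (B - 1 + x) * (1 - x)⁻¹ := by
    rw [hA]; field_simp; ring
  rw [hA1, ← mul_assoc, mul_comm (t * (B - 1 + x)) (1 - x)⁻¹]
  rw [← div_eq_inv_mul, div_lt_iff₀ h1x]
  nlinarith
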